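/- Let H be a complex Hilbert space, let K : H → H be a bounded self-adjoint operator which is nonnegative (⟨K x, x⟩ ≥ 0 for all x ∈ H) and satisfies ‖K‖ < 1, and let b ∈ H with b ≠ 0. Then there exists a unique real number λ* with λ* > ‖K‖ such that λ* − 1 = ⟨(λ* I − K)^{−1} b, b⟩, and this λ* satisfies λ* > 1. -/

import Mathlib

open scoped InnerProductSpace ComplexOrder

namespace Stmt16Aux

variable {H : Type*} [NormedAddCommGroup H] [InnerProductSpace ℂ H] [CompleteSpace H]

theorem unit [Nontrivial H] (K : H →L[ℂ] H) {lam : ℝ} (h : ‖K‖ < lam) :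
    IsUnit ((lam : ℂ) • (1 : H →L[ℂ] H) - K) := by
  have h0 : (0:ℝ) ≤ lam := le_trans (norm_nonneg K) h.le
  have hs : (lam : ℂ) ∉ spectrum ℂ K := by
    intro hm
    have := spectrum.norm_le_norm_of_mem hm
    rw [Complex.norm_real, Real.norm_of_nonneg h0] at this
    linarith
  have := spectrum.notMem_iff.mp hs
  rwa [Algebra.algebraMap_eq_smul_one] at this

theorem sa {K : H →L[ℂ] H} (hK : IsSelfAdjoint K) (lam : ℝ) :
    IsSelfAdjoint ((lam : ℂ) • (1 : H →L[ℂ] H) - K) := by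
  simp [IsSelfAdjoint, star_sub, star_smul, hK.star_eq, Complex.star_def, Complex.conj_ofReal]

theorem inv_sa {K : H →L[ℂ] H} (hK : IsSelfAdjoint K) (lam : ℝ) :
    IsSelfAdjoint (Ring.inverse ((lam : ℂ) • (1 : H →L[ℂ] H) - K)) := by
  unfold IsSelfAdjoint
  rw [← Ring.inverse_star, (sa hK lam).star_eq]

theorem im_zero {K : H →L[ℂ] H} (hK : IsSelfAdjoint K) (lam : ℝ) (b : H) :
    (⟪b, (Ring.inverse ((lam : ℂ) • (1 : H →L[ℂ] H) - K)) b⟫_ℂ).im = 0 := by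
  rw [← Complex.conj_eq_iff_im, ← inner_conj_symm]
  simpa using (inv_sa hK lam).isSymmetric b b

theorem aux_re (K : H →L[ℂ] H) (lam : ℝ) (x : H) :
    (⟪x, ((lam : ℂ) • (1 : H →L[ℂ] H) - K) x⟫_ℂ).re
      = lam * ‖x‖^2 - (⟪x, K x⟫_ℂ).re := by
  have hre : (⟪x, x⟫_ℂ).re = ‖x‖^2 := inner_self_eq_norm_sq (𝕜 := ℂ) x
  have him : (⟪x, x⟫_ℂ).im = 0 := inner_self_im (𝕜 := ℂ) x
  rw [ContinuousLinearMap.sub_apply, inner_sub_right, ContinuousLinearMap.smul_apply,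
    ContinuousLinearMap.one_apply, inner_smul_right, Complex.sub_re, Complex.mul_re,
    hre, him, Complex.ofReal_re, Complex.ofReal_im]
  ring

theorem aux_pos (K : H →L[ℂ] H) {lam : ℝ} (h : ‖K‖ < lam) (x : H) :
    (lam - ‖K‖) * ‖x‖^2 ≤ (⟪x, ((lam : ℂ) • (1 : H →L[ℂ] H) - K) x⟫_ℂ).re := by
  rw [aux_re]
  have h2 : (⟪x, K x⟫_ℂ).re ≤ ‖K‖ * ‖x‖^2 := by
    calc (⟪x, K x⟫_ℂ).re ≤ ‖⟪x, K x⟫_ℂ‖ := Complex.re_le_norm _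
      _ ≤ ‖x‖ * ‖K x‖ := norm_inner_le_norm _ _
      _ ≤ ‖x‖ * (‖K‖ * ‖x‖) := mul_le_mul_of_nonneg_left (K.le_opNorm x) (norm_nonneg x)
      _ = ‖K‖ * ‖x‖^2 := by ring
  nlinarith [sq_nonneg ‖x‖]

theorem aux_norm (K : H →L[ℂ] H) {lam : ℝ} (h : ‖K‖ < lam) (x : H) :
    (lam - ‖K‖) * ‖x‖ ≤ ‖((lam : ℂ) • (1 : H →L[ℂ] H) - K) x‖ := by
  have h0 : (0:ℝ) ≤ lam := le_trans (norm_nonneg K) h.le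
  have := norm_sub_norm_le ((lam:ℂ) • x) (K x)
  have hKx : ‖K x‖ ≤ ‖K‖ * ‖x‖ := K.le_opNorm x
  have h1 : ‖(lam:ℂ) • x‖ = lam * ‖x‖ := by
    rw [norm_smul, Complex.norm_real, Real.norm_of_nonneg h0]
  simp only [ContinuousLinearMap.sub_apply, ContinuousLinearMap.smul_apply,
    ContinuousLinearMap.one_apply]
  nlinarith [norm_nonneg x]

/-- `A (R y) = y` for units. -/
theorem apply_inv [Nontrivial H] (K : H →L[ℂ] H) {lam : ℝ} (h : ‖K‖ < lam) (y : H) :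
    ((lam : ℂ) • (1 : H →L[ℂ] H) - K)
      ((Ring.inverse ((lam : ℂ) • (1 : H →L[ℂ] H) - K)) y) = y := by
  have h1 := Ring.mul_inverse_cancel _ (unit K h)
  have h2 := congrArg (fun T : H →L[ℂ] H => T y) h1
  simpa using h2

/-- lower bound for `re ⟪y, R y⟫`. -/
theorem re_R_ge [Nontrivial H] {K : H →L[ℂ] H} (hK : IsSelfAdjoint K) {lam : ℝ}
    (h : ‖K‖ < lam) (y : H) :
    (lam - ‖K‖) * ‖(Ring.inverse ((lam : ℂ) • (1 : H →L[ℂ] H) - K)) y‖^2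
      ≤ (⟪y, (Ring.inverse ((lam : ℂ) • (1 : H →L[ℂ] H) - K)) y⟫_ℂ).re := by
  set A := (lam : ℂ) • (1 : H →L[ℂ] H) - K with hA
  set z := (Ring.inverse A) y with hz
  have hAz : A z = y := apply_inv K h y
  have h1 : ⟪y, z⟫_ℂ = ⟪A z, z⟫_ℂ := by rw [hAz]
  have h2 : (⟪A z, z⟫_ℂ).re = (⟪z, A z⟫_ℂ).re := by
    rw [← inner_conj_symm]; exact Complex.conj_re _
  rw [h1, h2]
  exact aux_pos K h z

theorem re_R_pos [Nontrivial H] {K : H →L[ℂ] H} (hK : IsSelfAdjoint K) {lam : ℝ}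
    (h : ‖K‖ < lam) {b : H} (hb : b ≠ 0) :
    0 < (⟪b, (Ring.inverse ((lam : ℂ) • (1 : H →L[ℂ] H) - K)) b⟫_ℂ).re := by
  have hz : (Ring.inverse ((lam : ℂ) • (1 : H →L[ℂ] H) - K)) b ≠ 0 := by
    intro h0
    have := apply_inv K h b
    rw [h0] at this
    simp at this
    exact hb this.symm
  have := re_R_ge hK h b
  have hn : 0 < ‖(Ring.inverse ((lam : ℂ) • (1 : H →L[ℂ] H) - K)) b‖ := norm_pos_iff.mpr hz
  exact lt_of_lt_of_le (mul_pos (sub_pos.mpr h) (pow_pos hn 2)) this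

/-- resolvent formula. -/
theorem R_diff [Nontrivial H] (K : H →L[ℂ] H) {lam mu : ℝ} (hl : ‖K‖ < lam) (hm : ‖K‖ < mu) :
    Ring.inverse ((lam : ℂ) • (1 : H →L[ℂ] H) - K)
      - Ring.inverse ((mu : ℂ) • (1 : H →L[ℂ] H) - K)
    = ((mu : ℂ) - (lam : ℂ)) •
        (Ring.inverse ((lam : ℂ) • (1 : H →L[ℂ] H) - K) *
         Ring.inverse ((mu : ℂ) • (1 : H →L[ℂ] H) - K)) := by
  set A := (lam : ℂ) • (1 : H →L[ℂ] H) - K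
  set B := (mu : ℂ) • (1 : H →L[ℂ] H) - K
  have hAB : B - A = ((mu : ℂ) - (lam : ℂ)) • (1 : H →L[ℂ] H) := by
    simp only [A, B, sub_sub_sub_cancel_right, ← sub_smul]
  calc Ring.inverse A - Ring.inverse B
      = Ring.inverse A * (B * Ring.inverse B)
        - (Ring.inverse A * A) * Ring.inverse B := by
        rw [Ring.mul_inverse_cancel _ (unit K hm), Ring.inverse_mul_cancel _ (unit K hl),
          mul_one, one_mul]
    _ = Ring.inverse A * ((B - A) * Ring.inverse B) := by noncomm_ring
    _ = ((mu : ℂ) - (lam : ℂ)) • (Ring.inverse A * Ring.inverse B) := by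
        rw [hAB, smul_mul_assoc, one_mul, mul_smul_comm]

/-- antitonicity of `re ⟪b, R b⟫`. -/
theorem F_anti [Nontrivial H] {K : H →L[ℂ] H} (hK : IsSelfAdjoint K) {lam mu : ℝ}
    (hl : ‖K‖ < lam) (hlm : lam ≤ mu) (b : H) :
    (⟪b, (Ring.inverse ((mu : ℂ) • (1 : H →L[ℂ] H) - K)) b⟫_ℂ).re
      ≤ (⟪b, (Ring.inverse ((lam : ℂ) • (1 : H →L[ℂ] H) - K)) b⟫_ℂ).re := by
  have hm : ‖K‖ < mu := lt_of_lt_of_le hl hlm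
  set A := (lam : ℂ) • (1 : H →L[ℂ] H) - K with hA
  set B := (mu : ℂ) • (1 : H →L[ℂ] H) - K with hB
  set y := (Ring.inverse B) b with hy
  set z := (Ring.inverse A) y with hz
  -- re ⟪b, R_lam y⟫ ≥ 0
  have hBy : B y = b := apply_inv K hm b
  have hAz : A z = y := apply_inv K hl y
  have key : 0 ≤ (⟪b, (Ring.inverse A) y⟫_ℂ).re := by
    have hsym := (sa hK lam).isSymmetric
    have hBy' : B y = A y + ((mu - lam : ℝ) : ℂ) • y := by
      simp only [hA, hB, ContinuousLinearMap.sub_apply, ContinuousLinearMap.smul_apply,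
        ContinuousLinearMap.one_apply, Complex.ofReal_sub, sub_smul]
      abel
    have hAyz : ⟪A y, z⟫_ℂ = ⟪y, y⟫_ℂ := by
      have h10 := hsym y z
      simp only [ContinuousLinearMap.coe_coe] at h10
      rw [h10, hAz]
    have h1 : ⟪b, z⟫_ℂ = ⟪y, y⟫_ℂ + ((mu - lam : ℝ) : ℂ) * ⟪y, z⟫_ℂ := by
      conv_lhs => rw [← hBy]
      rw [hBy', inner_add_left, inner_smul_left, Complex.conj_ofReal, hAyz]
    have h5 : 0 ≤ (⟪y, z⟫_ℂ).re := by
      have h11 := re_R_ge hK hl y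
      have h12 : (0:ℝ) ≤ (lam - ‖K‖) * ‖(Ring.inverse A) y‖ ^ 2 := by
        have := sq_nonneg ‖(Ring.inverse A) y‖
        nlinarith
      calc (0:ℝ) ≤ (lam - ‖K‖) * ‖(Ring.inverse A) y‖ ^ 2 := h12
        _ ≤ (⟪y, (Ring.inverse A) y⟫_ℂ).re := h11
        _ = (⟪y, z⟫_ℂ).re := by rw [← hz]
    have hyy : (⟪y, y⟫_ℂ).re = ‖y‖^2 := inner_self_eq_norm_sq (𝕜 := ℂ) y
    rw [← hz, h1, Complex.add_re, Complex.re_ofReal_mul, hyy]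
    nlinarith [sq_nonneg ‖y‖]
  -- now use the resolvent identity
  have hdiff := R_diff K hl hm
  have h7 : ⟪b, (Ring.inverse A) b⟫_ℂ - ⟪b, (Ring.inverse B) b⟫_ℂ
      = ((mu : ℂ) - lam) * ⟪b, (Ring.inverse A) y⟫_ℂ := by
    rw [← inner_sub_right]
    have : (Ring.inverse A) b - (Ring.inverse B) b
        = (((mu : ℂ) - lam) • (Ring.inverse A * Ring.inverse B)) b := by
      rw [← hdiff]; rfl
    rw [this]
    simp only [ContinuousLinearMap.smul_apply, inner_smul_right]
    rfl
  have h8 : (⟪b, (Ring.inverse A) b⟫_ℂ).re - (⟪b, (Ring.inverse B) b⟫_ℂ).re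
      = (mu - lam) * (⟪b, (Ring.inverse A) y⟫_ℂ).re := by
    have := congrArg Complex.re h7
    rw [Complex.sub_re] at this
    rw [this]
    have hcast : ((mu : ℂ) - lam) = ((mu - lam : ℝ) : ℂ) := by push_cast; ring
    rw [hcast, Complex.re_ofReal_mul]
  nlinarith

/-- upper bound for `re ⟪b, R b⟫`. -/
theorem F_upper [Nontrivial H] (K : H →L[ℂ] H) {lam : ℝ} (h : ‖K‖ < lam) (b : H) :
    (lam - ‖K‖) * (⟪b, (Ring.inverse ((lam : ℂ) • (1 : H →L[ℂ] H) - K)) b⟫_ℂ).re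
      ≤ ‖b‖^2 := by
  set A := (lam : ℂ) • (1 : H →L[ℂ] H) - K with hA
  set x := (Ring.inverse A) b with hx
  have hAx : A x = b := apply_inv K h b
  have h1 : (lam - ‖K‖) * ‖x‖ ≤ ‖b‖ := by
    have := aux_norm K h x
    rwa [hAx] at this
  have h2 : (⟪b, x⟫_ℂ).re ≤ ‖b‖ * ‖x‖ := by
    calc (⟪b, x⟫_ℂ).re ≤ ‖⟪b, x⟫_ℂ‖ := Complex.re_le_norm _
      _ ≤ ‖b‖ * ‖x‖ := norm_inner_le_norm _ _
  have hpos : (0:ℝ) < lam - ‖K‖ := by linarith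
  nlinarith [norm_nonneg x, norm_nonneg b]

/-- continuity. -/
theorem F_cont [Nontrivial H] (K : H →L[ℂ] H) {lam : ℝ} (h : ‖K‖ < lam) (b : H) :
    ContinuousAt (fun t : ℝ =>
      (⟪b, (Ring.inverse ((t : ℂ) • (1 : H →L[ℂ] H) - K)) b⟫_ℂ).re) lam := by
  have h1 : Continuous (fun t : ℝ => (t : ℂ) • (1 : H →L[ℂ] H) - K) := by
    exact (Complex.continuous_ofReal.smul continuous_const).sub continuous_const
  obtain ⟨u, hu⟩ := unit K h
  have h2 : ContinuousAt Ring.inverse ((lam : ℂ) • (1 : H →L[ℂ] H) - K) := by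
    rw [← hu]; exact NormedRing.inverse_continuousAt u
  have h3 : ContinuousAt (fun t : ℝ => Ring.inverse ((t : ℂ) • (1 : H →L[ℂ] H) - K)) lam := by
    have := ContinuousAt.comp (g := Ring.inverse)
      (f := fun t : ℝ => (t : ℂ) • (1 : H →L[ℂ] H) - K) (x := lam) h2 h1.continuousAt
    exact this
  have h4 : ContinuousAt (fun t : ℝ =>
      (Ring.inverse ((t : ℂ) • (1 : H →L[ℂ] H) - K)) b) lam := by
    have hc : Continuous (fun T : H →L[ℂ] H => T b) := by
      exact (ContinuousLinearMap.apply ℂ H b).continuous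
    have := ContinuousAt.comp (g := fun T : H →L[ℂ] H => T b)
      (f := fun t : ℝ => Ring.inverse ((t : ℂ) • (1 : H →L[ℂ] H) - K)) (x := lam)
      hc.continuousAt h3
    exact this
  have h5 : ContinuousAt (fun x : H => ⟪b, x⟫_ℂ) ((Ring.inverse
      ((lam : ℂ) • (1 : H →L[ℂ] H) - K)) b) := by
    exact (continuous_const.inner continuous_id).continuousAt
  have h6 := ContinuousAt.comp (g := fun x : H => ⟪b, x⟫_ℂ)
    (f := fun t : ℝ => (Ring.inverse ((t : ℂ) • (1 : H →L[ℂ] H) - K)) b) (x := lam) h5 h4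
  have := ContinuousAt.comp (g := Complex.re)
    (f := fun t : ℝ => ⟪b, (Ring.inverse ((t : ℂ) • (1 : H →L[ℂ] H) - K)) b⟫_ℂ) (x := lam)
    Complex.continuous_re.continuousAt h6
  exact this

end Stmt16Aux

open scoped ComplexOrder in
/-- Existence and uniqueness of the Schur root: if `K` is self-adjoint, nonnegative,
`‖K‖ < 1`, and `b ≠ 0`, there is a unique `λ* > ‖K‖` with
`λ* − 1 = ⟨(λ*I − K)⁻¹ b, b⟩`, and this `λ*` satisfies `λ* > 1`.
(Inner products linear in the first argument: `⟨x,y⟩ = ⟪y,x⟫` in Mathlib's convention.) -/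
theorem stmt16 {H : Type*} [NormedAddCommGroup H] [InnerProductSpace ℂ H]
    [CompleteSpace H] (K : H →L[ℂ] H) (hK : IsSelfAdjoint K)
    (hpos : ∀ x : H, 0 ≤ (inner ℂ x (K x) : ℂ))
    (hnorm : ‖K‖ < 1) (b : H) (hb : b ≠ 0) :
    (∃! lam : ℝ, ‖K‖ < lam ∧
        (lam : ℂ) - 1
          = (inner ℂ b ((Ring.inverse ((lam : ℂ) • (1 : H →L[ℂ] H) - K)) b) : ℂ)) ∧
    ∀ lam : ℝ, ‖K‖ < lam →
      (lam : ℂ) - 1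
          = (inner ℂ b ((Ring.inverse ((lam : ℂ) • (1 : H →L[ℂ] H) - K)) b) : ℂ) →
      1 < lam := by
  haveI : Nontrivial H := nontrivial_of_ne b 0 hb
  set n := ‖K‖ with hn
  have hn0 : 0 ≤ n := norm_nonneg K
  set F : ℝ → ℝ := fun t =>
    (⟪b, (Ring.inverse ((t : ℂ) • (1 : H →L[ℂ] H) - K)) b⟫_ℂ).re with hF
  -- equivalence between the complex equation and the real one
  have hequiv : ∀ lam : ℝ, n < lam →
      (((lam : ℂ) - 1
        = (inner ℂ b ((Ring.inverse ((lam : ℂ) • (1 : H →L[ℂ] H) - K)) b) : ℂ)) ↔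
       lam - 1 = F lam) := by
    intro lam hlam
    constructor
    · intro h
      have := congrArg Complex.re h
      simpa [hF] using this
    · intro h
      apply Complex.ext
      · simpa [hF] using h
      · have h0 := Stmt16Aux.im_zero hK lam b
        simp only [Complex.sub_im, Complex.ofReal_im, Complex.one_im]
        rw [h0]
        norm_num
  -- the function G
  set G : ℝ → ℝ := fun t => t - 1 - F t with hG
  -- strict monotonicity of G on (n, ∞)
  have hGmono : ∀ lam mu : ℝ, n < lam → lam < mu → G lam < G mu := by
    intro lam mu hl hlm
    have := Stmt16Aux.F_anti hK hl hlm.le b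
    simp only [hG, hF] at *
    nlinarith
  -- endpoints
  set l0 : ℝ := (n + 1) / 2 with hl0
  have hl0n : n < l0 := by simp only [hl0]; linarith
  have hl01 : l0 < 1 := by simp only [hl0]; linarith
  set l1 : ℝ := max (n + 1) (2 + ‖b‖^2) with hl1
  have hl1n : n + 1 ≤ l1 := le_max_left _ _
  have hl1b : 2 + ‖b‖^2 ≤ l1 := le_max_right _ _
  have hl1n' : n < l1 := by linarith
  have hl0l1 : l0 ≤ l1 := by simp only [hl0]; linarith
  have hG0 : G l0 < 0 := by
    have := Stmt16Aux.re_R_pos hK hl0n hb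
    simp only [hG, hF]
    nlinarith
  have hG1 : 0 < G l1 := by
    have h1 := Stmt16Aux.F_upper K hl1n' b
    have h2 : (1:ℝ) ≤ l1 - n := by linarith
    have h3 : F l1 ≤ ‖b‖^2 := by
      have hFpos : 0 < F l1 := Stmt16Aux.re_R_pos hK hl1n' hb
      nlinarith
    simp only [hG]
    nlinarith
  -- continuity of G on [l0, l1]
  have hGcont : ContinuousOn G (Set.Icc l0 l1) := by
    intro t ht
    have htn : n < t := lt_of_lt_of_le hl0n ht.1
    have : ContinuousAt G t :=
      (continuousAt_id.sub continuousAt_const).sub (Stmt16Aux.F_cont K htn b)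
    exact this.continuousWithinAt
  -- IVT
  have hIVT : ∃ lam ∈ Set.Icc l0 l1, G lam = 0 := by
    have h0 : (0:ℝ) ∈ Set.Icc (G l0) (G l1) := ⟨hG0.le, hG1.le⟩
    have := intermediate_value_Icc hl0l1 hGcont h0
    obtain ⟨lam, hlam, hlam0⟩ := this
    exact ⟨lam, hlam, hlam0⟩
  obtain ⟨lam, hlamIcc, hlamG⟩ := hIVT
  have hlamn : n < lam := lt_of_lt_of_le hl0n hlamIcc.1
  have hlameq : lam - 1 = F lam := by simp only [hG] at hlamG; linarith
  -- lam > 1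
  have hgt1 : ∀ m : ℝ, n < m → m - 1 = F m → 1 < m := by
    intro m hm hmeq
    have := Stmt16Aux.re_R_pos hK hm hb
    simp only [hF] at hmeq ⊢
    nlinarith
  constructor
  · refine ⟨lam, ⟨hlamn, (hequiv lam hlamn).mpr hlameq⟩, ?_⟩
    intro y hy
    have hyn : n < y := hy.1
    have hyeq : y - 1 = F y := (hequiv y hyn).mp hy.2
    by_contra hne
    rcases lt_or_gt_of_ne hne with hlt | hgt
    · have := hGmono y lam hyn hlt
      simp only [hG] at this
      nlinarith
    · have := hGmono lam y hlamn hgt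
      simp only [hG] at this
      nlinarith
  · intro m hm heq
    exact hgt1 m hm ((hequiv m hm).mp heq)
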